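/- Let (H,K) be a match pair of finite groupoids for G with middle map m. Then for every unit u ∈ G⁰, Card(m⁻¹(u)) = Card(G^u), where G^u = {g ∈ G : r(g) = u}. -/
import Mathlib


/-- A (small) groupoid structure on a carrier type `G` of "arrows", with
source map `s`, range map `r`, partial multiplication `mul` (defined when
`s x = r y`) and inversion `inv`.  Units are identified with the elements
`s x`, `r x`. -/
structure Gpd (G : Type*) where
  s : G → G
  r : G → G
  mul : ∀ x y : G, s x = r y → G
  inv : G → G
  s_mul : ∀ x y h, s (mul x y h) = s y
  r_mul : ∀ x y h, r (mul x y h) = r x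
  s_inv : ∀ x, s (inv x) = r x
  r_inv : ∀ x, r (inv x) = s x
  s_s : ∀ x, s (s x) = s x
  r_s : ∀ x, r (s x) = s x
  s_r : ∀ x, s (r x) = r x
  r_r : ∀ x, r (r x) = r x
  mul_source : ∀ x (h : s x = r (s x)), mul x (s x) h = x
  range_mul : ∀ x (h : s (r x) = r x), mul (r x) x h = x
  mul_inv : ∀ x (h : s x = r (inv x)), mul x (inv x) h = r x
  inv_mul : ∀ x (h : s (inv x) = r x), mul (inv x) x h = s x
  mul_assoc : ∀ x y z (hxy : s x = r y) (hyz : s y = r z)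
      (h1 : s (mul x y hxy) = r z) (h2 : s x = r (mul y z hyz)),
      mul (mul x y hxy) z h1 = mul x (mul y z hyz) h2

namespace Gpd

variable {G : Type*} (𝒢 : Gpd G)

/-- The set of units `G⁰` of the groupoid. -/
def units : Set G := {u | 𝒢.r u = u}

/-- A wide subgroupoid: a subset closed under multiplication and inversion and
containing all units. -/
structure IsSubgpd (H : Set G) : Prop where
  mul_mem : ∀ x y (h : 𝒢.s x = 𝒢.r y), x ∈ H → y ∈ H → 𝒢.mul x y h ∈ H
  inv_mem : ∀ x, x ∈ H → 𝒢.inv x ∈ H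
  unit_mem : ∀ u, u ∈ 𝒢.units → u ∈ H

/-- A match pair of subgroupoids `H`, `K` of `G`, together with the projection
maps `p₁ : G → H`, `p₂ : G → K` of the unique factorization `g = p₁ g * p₂ g`. -/
structure MatchPair (H K : Set G) (p₁ p₂ : G → G) : Prop where
  subH : 𝒢.IsSubgpd H
  subK : 𝒢.IsSubgpd K
  inter : H ∩ K ⊆ 𝒢.units
  p₁_mem : ∀ g, p₁ g ∈ H
  p₂_mem : ∀ g, p₂ g ∈ K
  comp : ∀ g, 𝒢.s (p₁ g) = 𝒢.r (p₂ g)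
  decomp : ∀ g, g = 𝒢.mul (p₁ g) (p₂ g) (comp g)
  uniq : ∀ h, h ∈ H → ∀ k, k ∈ K → ∀ hc : 𝒢.s h = 𝒢.r k,
      p₁ (𝒢.mul h k hc) = h ∧ p₂ (𝒢.mul h k hc) = k

theorem MatchPair.s_p₂ {H K : Set G} {p₁ p₂ : G → G}
    (mp : 𝒢.MatchPair H K p₁ p₂) (g : G) : 𝒢.s (p₂ g) = 𝒢.s g := by
  conv_rhs => rw [mp.decomp g]
  rw [𝒢.s_mul]

theorem MatchPair.r_p₁ {H K : Set G} {p₁ p₂ : G → G}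
    (mp : 𝒢.MatchPair H K p₁ p₂) (g : G) : 𝒢.r (p₁ g) = 𝒢.r g := by
  conv_rhs => rw [mp.decomp g]
  rw [𝒢.r_mul]

/-- the left "action" `k ▷ h = p₁ (kh)` -/
def rAct (p₁ : G → G) (k h : G) (hc : 𝒢.s k = 𝒢.r h) : G := p₁ (𝒢.mul k h hc)

/-- the right "action" `k ◁ h = p₂ (kh)` -/
def lAct (p₂ : G → G) (k h : G) (hc : 𝒢.s k = 𝒢.r h) : G := p₂ (𝒢.mul k h hc)

theorem mul_congr {x x' y y' : G} (hx : x = x') (hy : y = y')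
    (h : 𝒢.s x = 𝒢.r y) (h' : 𝒢.s x' = 𝒢.r y') :
    𝒢.mul x y h = 𝒢.mul x' y' h' := by subst hx; subst hy; rfl

theorem inv_cancel_left (x y : G) (hxy : 𝒢.s x = 𝒢.r y)
    (h : 𝒢.s (𝒢.inv x) = 𝒢.r (𝒢.mul x y hxy)) :
    𝒢.mul (𝒢.inv x) (𝒢.mul x y hxy) h = y := by
  have h1 : 𝒢.s (𝒢.inv x) = 𝒢.r x := 𝒢.s_inv x
  have h2 : 𝒢.s (𝒢.mul (𝒢.inv x) x h1) = 𝒢.r y := by rw [𝒢.s_mul]; exact hxy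
  rw [← 𝒢.mul_assoc (𝒢.inv x) x y h1 hxy h2 h]
  have h3 : 𝒢.mul (𝒢.inv x) x h1 = 𝒢.s x := 𝒢.inv_mul x h1
  have h4 : 𝒢.s (𝒢.r y) = 𝒢.r y := 𝒢.s_r y
  calc 𝒢.mul (𝒢.mul (𝒢.inv x) x h1) y h2
      = 𝒢.mul (𝒢.r y) y h4 := 𝒢.mul_congr (h3.trans hxy) rfl h2 h4
    _ = y := 𝒢.range_mul y h4

theorem mul_cancel_right (y x : G) (hxy : 𝒢.s y = 𝒢.r x)
    (h : 𝒢.s (𝒢.mul y x hxy) = 𝒢.r (𝒢.inv x)) :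
    𝒢.mul (𝒢.mul y x hxy) (𝒢.inv x) h = y := by
  have h1 : 𝒢.s x = 𝒢.r (𝒢.inv x) := (𝒢.r_inv x).symm
  have h2 : 𝒢.s y = 𝒢.r (𝒢.mul x (𝒢.inv x) h1) := by rw [𝒢.r_mul]; exact hxy
  rw [𝒢.mul_assoc y x (𝒢.inv x) hxy h1 h h2]
  have h3 : 𝒢.mul x (𝒢.inv x) h1 = 𝒢.r x := 𝒢.mul_inv x h1
  have h4 : 𝒢.s y = 𝒢.r (𝒢.s y) := (𝒢.r_s y).symm
  calc 𝒢.mul y (𝒢.mul x (𝒢.inv x) h1) h2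
      = 𝒢.mul y (𝒢.s y) h4 := 𝒢.mul_congr rfl (h3.trans hxy.symm) h2 h4
    _ = y := 𝒢.mul_source y h4

theorem inv_inv' (x : G) : 𝒢.inv (𝒢.inv x) = x := by
  have h1 : 𝒢.s x = 𝒢.r (𝒢.inv x) := (𝒢.r_inv x).symm
  have h2 : 𝒢.s (𝒢.mul x (𝒢.inv x) h1) = 𝒢.r (𝒢.inv (𝒢.inv x)) := by
    rw [𝒢.s_mul, 𝒢.s_inv, 𝒢.r_inv, 𝒢.s_inv]
  have h3 := 𝒢.mul_cancel_right x (𝒢.inv x) h1 h2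
  have h5 : 𝒢.s (𝒢.r (𝒢.inv (𝒢.inv x))) = 𝒢.r (𝒢.inv (𝒢.inv x)) := 𝒢.s_r _
  have h6 : 𝒢.r (𝒢.inv (𝒢.inv x)) = 𝒢.r x := by rw [𝒢.r_inv, 𝒢.s_inv]
  calc 𝒢.inv (𝒢.inv x)
      = 𝒢.mul (𝒢.r (𝒢.inv (𝒢.inv x))) (𝒢.inv (𝒢.inv x)) h5 := (𝒢.range_mul _ h5).symm
    _ = 𝒢.mul (𝒢.mul x (𝒢.inv x) h1) (𝒢.inv (𝒢.inv x)) h2 :=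
        𝒢.mul_congr (h6.trans (𝒢.mul_inv x h1).symm) rfl h5 h2
    _ = x := h3

theorem mul_inv_rev (x y : G) (hxy : 𝒢.s x = 𝒢.r y)
    (h : 𝒢.s (𝒢.inv y) = 𝒢.r (𝒢.inv x)) :
    𝒢.inv (𝒢.mul x y hxy) = 𝒢.mul (𝒢.inv y) (𝒢.inv x) h := by
  have hab : 𝒢.s (𝒢.mul x y hxy) = 𝒢.r (𝒢.mul (𝒢.inv y) (𝒢.inv x) h) := by
    rw [𝒢.s_mul, 𝒢.r_mul, 𝒢.r_inv]
  have hc1 : 𝒢.s (𝒢.mul x y hxy) = 𝒢.r (𝒢.inv y) := by rw [𝒢.s_mul, 𝒢.r_inv]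
  have hc2 : 𝒢.s (𝒢.mul (𝒢.mul x y hxy) (𝒢.inv y) hc1) = 𝒢.r (𝒢.inv x) := by
    rw [𝒢.s_mul, 𝒢.s_inv, 𝒢.r_inv]; exact hxy.symm
  -- a·b = x·x⁻¹ = r x
  have e1 : 𝒢.mul (𝒢.mul x y hxy) (𝒢.mul (𝒢.inv y) (𝒢.inv x) h) hab = 𝒢.r x := by
    rw [← 𝒢.mul_assoc (𝒢.mul x y hxy) (𝒢.inv y) (𝒢.inv x) hc1 h hc2 hab]
    have e2 : 𝒢.mul (𝒢.mul x y hxy) (𝒢.inv y) hc1 = x := 𝒢.mul_cancel_right x y hxy hc1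
    have h1 : 𝒢.s x = 𝒢.r (𝒢.inv x) := (𝒢.r_inv x).symm
    calc 𝒢.mul (𝒢.mul (𝒢.mul x y hxy) (𝒢.inv y) hc1) (𝒢.inv x) hc2
        = 𝒢.mul x (𝒢.inv x) h1 := 𝒢.mul_congr e2 rfl hc2 h1
      _ = 𝒢.r x := 𝒢.mul_inv x h1
  have h' : 𝒢.s (𝒢.inv (𝒢.mul x y hxy)) =
      𝒢.r (𝒢.mul (𝒢.mul x y hxy) (𝒢.mul (𝒢.inv y) (𝒢.inv x) h) hab) := by
    rw [𝒢.s_inv, 𝒢.r_mul, 𝒢.r_mul, 𝒢.r_mul]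
  have hsrc : 𝒢.s (𝒢.inv (𝒢.mul x y hxy)) =
      𝒢.r (𝒢.s (𝒢.inv (𝒢.mul x y hxy))) := (𝒢.r_s _).symm
  symm
  calc 𝒢.mul (𝒢.inv y) (𝒢.inv x) h
      = 𝒢.mul (𝒢.inv (𝒢.mul x y hxy))
          (𝒢.mul (𝒢.mul x y hxy) (𝒢.mul (𝒢.inv y) (𝒢.inv x) h) hab) h' :=
        (𝒢.inv_cancel_left (𝒢.mul x y hxy) (𝒢.mul (𝒢.inv y) (𝒢.inv x) h) hab h').symm
    _ = 𝒢.mul (𝒢.inv (𝒢.mul x y hxy)) (𝒢.s (𝒢.inv (𝒢.mul x y hxy))) hsrc := by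
        refine 𝒢.mul_congr rfl ?_ h' hsrc
        rw [e1, 𝒢.s_inv, 𝒢.r_mul]
    _ = 𝒢.inv (𝒢.mul x y hxy) := 𝒢.mul_source _ hsrc

theorem MatchPair.p₂_mul_inv {H K : Set G} {p₁ p₂ : G → G}
    (mp : 𝒢.MatchPair H K p₁ p₂) (k h : G) (hk : k ∈ K)
    (hc : 𝒢.s k = 𝒢.r h)
    (h2 : 𝒢.s (p₂ (𝒢.mul k h hc)) = 𝒢.r (𝒢.inv h)) :
    p₂ (𝒢.mul (p₂ (𝒢.mul k h hc)) (𝒢.inv h) h2) = k := by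
  have c1 := mp.comp (𝒢.mul k h hc)
  have c2 : 𝒢.s (𝒢.inv (p₁ (𝒢.mul k h hc))) = 𝒢.r (𝒢.mul k h hc) := by
    rw [𝒢.s_inv, mp.r_p₁]
  have c2' : 𝒢.s (𝒢.inv (p₁ (𝒢.mul k h hc))) =
      𝒢.r (𝒢.mul (p₁ (𝒢.mul k h hc)) (p₂ (𝒢.mul k h hc)) c1) := by
    rw [𝒢.s_inv, 𝒢.r_mul]
  have e1 : p₂ (𝒢.mul k h hc) =
      𝒢.mul (𝒢.inv (p₁ (𝒢.mul k h hc))) (𝒢.mul k h hc) c2 :=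
    calc p₂ (𝒢.mul k h hc)
        = 𝒢.mul (𝒢.inv (p₁ (𝒢.mul k h hc)))
            (𝒢.mul (p₁ (𝒢.mul k h hc)) (p₂ (𝒢.mul k h hc)) c1) c2' :=
          (𝒢.inv_cancel_left _ _ c1 c2').symm
      _ = 𝒢.mul (𝒢.inv (p₁ (𝒢.mul k h hc))) (𝒢.mul k h hc) c2 :=
          𝒢.mul_congr rfl (mp.decomp _).symm c2' c2
  have c3 : 𝒢.s (𝒢.mul k h hc) = 𝒢.r (𝒢.inv h) := by rw [𝒢.s_mul, 𝒢.r_inv]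
  have c4 : 𝒢.s (𝒢.inv (p₁ (𝒢.mul k h hc))) = 𝒢.r (𝒢.mul (𝒢.mul k h hc) (𝒢.inv h) c3) := by
    simp [𝒢.s_inv, mp.r_p₁, 𝒢.r_mul]
  have h2'' : 𝒢.s (𝒢.mul (𝒢.inv (p₁ (𝒢.mul k h hc))) (𝒢.mul k h hc) c2) = 𝒢.r (𝒢.inv h) := by
    rw [𝒢.s_mul]; exact c3
  have e2 : 𝒢.mul (𝒢.mul k h hc) (𝒢.inv h) c3 = k := 𝒢.mul_cancel_right k h hc c3
  have c5 : 𝒢.s (𝒢.inv (p₁ (𝒢.mul k h hc))) = 𝒢.r k := by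
    simp [𝒢.s_inv, mp.r_p₁, 𝒢.r_mul]
  calc p₂ (𝒢.mul (p₂ (𝒢.mul k h hc)) (𝒢.inv h) h2)
      = p₂ (𝒢.mul (𝒢.mul (𝒢.inv (p₁ (𝒢.mul k h hc))) (𝒢.mul k h hc) c2) (𝒢.inv h) h2'') :=
        congrArg p₂ (𝒢.mul_congr e1 rfl h2 h2'')
    _ = p₂ (𝒢.mul (𝒢.inv (p₁ (𝒢.mul k h hc))) (𝒢.mul (𝒢.mul k h hc) (𝒢.inv h) c3) c4) :=
        congrArg p₂ (𝒢.mul_assoc _ _ _ c2 c3 h2'' c4)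
    _ = p₂ (𝒢.mul (𝒢.inv (p₁ (𝒢.mul k h hc))) k c5) :=
        congrArg p₂ (𝒢.mul_congr rfl e2 c4 c5)
    _ = k := (mp.uniq _ (mp.subH.inv_mem _ (mp.p₁_mem _)) k hk c5).2

theorem MatchPair.comp_F {H K : Set G} {p₁ p₂ : G → G}
    (mp : 𝒢.MatchPair H K p₁ p₂) (g : G) :
    𝒢.s (𝒢.inv (p₁ g)) = 𝒢.r (𝒢.inv (p₂ (𝒢.inv g))) := by
  rw [𝒢.s_inv, mp.r_p₁, 𝒢.r_inv, mp.s_p₂, 𝒢.s_inv]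

/-- The involution exchanging `G^u` and `m⁻¹(u)`. -/
def Fmap {H K : Set G} {p₁ p₂ : G → G} (mp : 𝒢.MatchPair H K p₁ p₂) (g : G) : G :=
  𝒢.mul (𝒢.inv (p₁ g)) (𝒢.inv (p₂ (𝒢.inv g))) (MatchPair.comp_F 𝒢 mp g)

theorem F_p₁ {H K : Set G} {p₁ p₂ : G → G} (mp : 𝒢.MatchPair H K p₁ p₂) (g : G) :
    p₁ (𝒢.Fmap mp g) = 𝒢.inv (p₁ g) :=
  (mp.uniq _ (mp.subH.inv_mem _ (mp.p₁_mem g)) _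
    (mp.subK.inv_mem _ (mp.p₂_mem _)) (MatchPair.comp_F 𝒢 mp g)).1

theorem s_p₁_F {H K : Set G} {p₁ p₂ : G → G} (mp : 𝒢.MatchPair H K p₁ p₂) (g : G) :
    𝒢.s (p₁ (𝒢.Fmap mp g)) = 𝒢.r g := by
  rw [𝒢.F_p₁ mp, 𝒢.s_inv, mp.r_p₁]

theorem r_F {H K : Set G} {p₁ p₂ : G → G} (mp : 𝒢.MatchPair H K p₁ p₂) (g : G) :
    𝒢.r (𝒢.Fmap mp g) = 𝒢.s (p₁ g) := by
  unfold Fmap; rw [𝒢.r_mul, 𝒢.r_inv]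

theorem inv_g_eq {H K : Set G} {p₁ p₂ : G → G} (mp : 𝒢.MatchPair H K p₁ p₂) (g : G)
    (hc : 𝒢.s (𝒢.inv (p₂ g)) = 𝒢.r (𝒢.inv (p₁ g))) :
    𝒢.inv g = 𝒢.mul (𝒢.inv (p₂ g)) (𝒢.inv (p₁ g)) hc := by
  conv_lhs => rw [mp.decomp g]
  exact 𝒢.mul_inv_rev _ _ _ hc

theorem inv_F {H K : Set G} {p₁ p₂ : G → G} (mp : 𝒢.MatchPair H K p₁ p₂) (g : G)
    (hin : 𝒢.s (p₂ (𝒢.inv g)) = 𝒢.r (p₁ g)) :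
    𝒢.inv (𝒢.Fmap mp g) = 𝒢.mul (p₂ (𝒢.inv g)) (p₁ g) hin := by
  have h' : 𝒢.s (𝒢.inv (𝒢.inv (p₂ (𝒢.inv g)))) = 𝒢.r (𝒢.inv (𝒢.inv (p₁ g))) := by
    rw [𝒢.inv_inv', 𝒢.inv_inv']; exact hin
  calc 𝒢.inv (𝒢.Fmap mp g)
      = 𝒢.mul (𝒢.inv (𝒢.inv (p₂ (𝒢.inv g)))) (𝒢.inv (𝒢.inv (p₁ g))) h' :=
        𝒢.mul_inv_rev _ _ (MatchPair.comp_F 𝒢 mp g) h'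
    _ = 𝒢.mul (p₂ (𝒢.inv g)) (p₁ g) hin :=
        𝒢.mul_congr (𝒢.inv_inv' _) (𝒢.inv_inv' _) h' hin

theorem p₂_inv_F {H K : Set G} {p₁ p₂ : G → G} (mp : 𝒢.MatchPair H K p₁ p₂) (g : G) :
    p₂ (𝒢.inv (𝒢.Fmap mp g)) = 𝒢.inv (p₂ g) := by
  have hc : 𝒢.s (𝒢.inv (p₂ g)) = 𝒢.r (𝒢.inv (p₁ g)) := by
    rw [𝒢.s_inv, 𝒢.r_inv]; exact (mp.comp g).symm
  have hin : 𝒢.s (p₂ (𝒢.inv g)) = 𝒢.r (p₁ g) := by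
    rw [mp.s_p₂, 𝒢.s_inv, mp.r_p₁]
  have h2 : 𝒢.s (p₂ (𝒢.mul (𝒢.inv (p₂ g)) (𝒢.inv (p₁ g)) hc)) =
      𝒢.r (𝒢.inv (𝒢.inv (p₁ g))) := by
    rw [mp.s_p₂, 𝒢.s_mul, 𝒢.s_inv, 𝒢.r_inv, 𝒢.s_inv]
  have key := MatchPair.p₂_mul_inv 𝒢 mp (𝒢.inv (p₂ g)) (𝒢.inv (p₁ g))
    (mp.subK.inv_mem _ (mp.p₂_mem g)) hc h2
  calc p₂ (𝒢.inv (𝒢.Fmap mp g))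
      = p₂ (𝒢.mul (p₂ (𝒢.inv g)) (p₁ g) hin) := by rw [𝒢.inv_F mp g hin]
    _ = p₂ (𝒢.mul (p₂ (𝒢.mul (𝒢.inv (p₂ g)) (𝒢.inv (p₁ g)) hc))
          (𝒢.inv (𝒢.inv (p₁ g))) h2) :=
        congrArg p₂ (𝒢.mul_congr (congrArg p₂ (𝒢.inv_g_eq mp g hc))
          (𝒢.inv_inv' _).symm hin h2)
    _ = 𝒢.inv (p₂ g) := key

theorem F_F {H K : Set G} {p₁ p₂ : G → G} (mp : 𝒢.MatchPair H K p₁ p₂) (g : G) :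
    𝒢.Fmap mp (𝒢.Fmap mp g) = g := by
  have h' : 𝒢.s (𝒢.inv (𝒢.inv (p₁ g))) = 𝒢.r (𝒢.inv (𝒢.inv (p₂ g))) := by
    rw [𝒢.inv_inv', 𝒢.inv_inv']; exact mp.comp g
  calc 𝒢.Fmap mp (𝒢.Fmap mp g)
      = 𝒢.mul (𝒢.inv (p₁ (𝒢.Fmap mp g))) (𝒢.inv (p₂ (𝒢.inv (𝒢.Fmap mp g))))
          (MatchPair.comp_F 𝒢 mp _) := rfl
    _ = 𝒢.mul (𝒢.inv (𝒢.inv (p₁ g))) (𝒢.inv (𝒢.inv (p₂ g))) h' :=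
        𝒢.mul_congr (congrArg 𝒢.inv (𝒢.F_p₁ mp g))
          (congrArg 𝒢.inv (𝒢.p₂_inv_F mp g)) (MatchPair.comp_F 𝒢 mp _) h'
    _ = 𝒢.mul (p₁ g) (p₂ g) (mp.comp g) :=
        𝒢.mul_congr (𝒢.inv_inv' _) (𝒢.inv_inv' _) h' (mp.comp g)
    _ = g := (mp.decomp g).symm

end Gpd

/-- For a match pair `(H,K)` with middle map `m = s ∘ p₁`, for
every unit `u`: `Card (m⁻¹ u) = Card (G^u)`. -/
theorem stmt4 {G : Type*} [Finite G] (𝒢 : Gpd G) (H K : Set G) (p₁ p₂ : G → G)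
    (mp : 𝒢.MatchPair H K p₁ p₂) (u : G) (hu : u ∈ 𝒢.units) :
    Set.ncard {g : G | 𝒢.s (p₁ g) = u} = Set.ncard {g : G | 𝒢.r g = u} := by
  have hinj : Set.InjOn (𝒢.Fmap mp) {g : G | 𝒢.r g = u} := by
    intro a _ b _ hab
    rw [← 𝒢.F_F mp a, hab, 𝒢.F_F mp b]
  have himg : 𝒢.Fmap mp '' {g : G | 𝒢.r g = u} = {g : G | 𝒢.s (p₁ g) = u} := by
    ext g
    constructor
    · rintro ⟨a, ha, rfl⟩
      simpa [Set.mem_setOf_eq, 𝒢.s_p₁_F mp a] using ha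
    · intro hg
      refine ⟨𝒢.Fmap mp g, ?_, 𝒢.F_F mp g⟩
      simpa [Set.mem_setOf_eq, 𝒢.r_F mp g] using hg
  rw [← himg, Set.ncard_image_of_injOn hinj]
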